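/- Reduced-horizon shift feasibility (key step in the proof of Theorem 1): Assume σ_{s,o} is monotonically increasing and S_f is monotone in the bound components (if (x̄, ē, s̄) ∈ S_f and 0 ≤ ē' ≤ ē, 0 ≤ s̄' ≤ s̄, then (x̄, ē', s̄') ∈ S_f). Suppose (x̄_0, (ū_0, …, ū_{N−1})) is feasible for the RPOF-SF problem at estimate x̂ with bound ē and horizon N ≥ 2, and let the next-step estimate x̂' and bound ē' satisfy ē' ≤ ρ_o · ē + σ_{o,w}(w̄) and V_s(x̄_1, x̂') ≤ ρ_s · V_s(x̄_0, x̂) + σ_{s,o}(ē) + σ_{s,o,w}(w̄), where x̄_1 = f(x̄_0, ū_0). Then the shifted candidate (x̄_1, (ū_1, …, ū_{N−1})) is feasible for the RPOF-SF problem at estimate x̂' with bound ē' and horizon N − 1. -/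
import Mathlib


/-- A vector in `ℝ^n`. -/
abbrev Vec (n : ℕ) := EuclideanSpace ℝ (Fin n)

/-- A class-`𝒦` function: continuous, strictly increasing and vanishing at `0`
(considered on the nonnegative reals). -/
def ClassK (σ : ℝ → ℝ) : Prop :=
  ContinuousOn σ (Set.Ici 0) ∧ StrictMonoOn σ (Set.Ici 0) ∧ σ 0 = 0

/-- The nominal trajectory `x̄_{i+1} = f(x̄_i, ū_i)` from initial state `x0`. -/
def nomTraj {X U : Type*} (f : X → U → X) (x0 : X) (u : ℕ → U) : ℕ → X
  | 0 => x0
  | i + 1 => f (nomTraj f x0 u i) (u i)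

/-- The propagated estimation-error bound
`ē_j = ρ_o^j ē + ((1 − ρ_o^j)/(1 − ρ_o)) σ_{o,w}(w̄)` (here `g = σ_{o,w}(w̄)`). -/
noncomputable def ebarSeq (ρo g e : ℝ) (j : ℕ) : ℝ :=
  ρo ^ j * e + ((1 - ρo ^ j) / (1 - ρo)) * g

/-- The scalar tube sizes `s̄_0 = s0`, `s̄_{i+1} = ρ_s s̄_i + σ_{s,o}(ē_i) + σ_{s,o,w}(w̄)`. -/
noncomputable def tubeSeq (ρs : ℝ) (σso σsow : ℝ → ℝ) (wbar s0 : ℝ) (e : ℕ → ℝ) : ℕ → ℝ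
  | 0 => s0
  | i + 1 => ρs * tubeSeq ρs σso σsow wbar s0 e i + σso (e i) + σsow wbar

/-- Feasibility predicate for the RPOF-SF open-loop problem (19): given horizon `N`,
state estimate `x̂` and estimation-error bound `ē`, a nominal initial state `x̄_0` and
inputs `ū_0, …, ū_{N−1}` are feasible if, with `x̄_{i+1} = f(x̄_i, ū_i)`,
`ē_j = ρ_o^j ē + ((1 − ρ_o^j)/(1 − ρ_o)) σ_{o,w}(w̄)`, `s̄_0 = V_s(x̄_0, x̂)` and
`s̄_{i+1} = ρ_s s̄_i + σ_{s,o}(ē_i) + σ_{s,o,w}(w̄)`: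
(i) for every `i < N` and all `z, ẑ` with `V_s(x̄_i, ẑ) ≤ s̄_i` and `V_o(ẑ, z) ≤ ē_i`,
`(z, π(ẑ, x̄_i, ū_i)) ∈ Z`; and (ii) `(x̄_N, ē_N, s̄_N) ∈ S_f`. -/
def Feasible {nx m : ℕ}
    (f : Vec nx → Vec m → Vec nx)
    (Vs Vo : Vec nx → Vec nx → ℝ)
    (ρo ρs wbar : ℝ)
    (σow σso σsow : ℝ → ℝ)
    (π : Vec nx → Vec nx → Vec m → Vec m)
    (Z : Set (Vec nx × Vec m))
    (Sf : Set (Vec nx × ℝ × ℝ))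
    (N : ℕ) (xhat : Vec nx) (e : ℝ)
    (xbar0 : Vec nx) (ubar : ℕ → Vec m) : Prop :=
  (∀ i < N, ∀ z zhat : Vec nx,
      Vs (nomTraj f xbar0 ubar i) zhat
        ≤ tubeSeq ρs σso σsow wbar (Vs xbar0 xhat) (ebarSeq ρo (σow wbar) e) i →
      Vo zhat z ≤ ebarSeq ρo (σow wbar) e i →
      (z, π zhat (nomTraj f xbar0 ubar i) (ubar i)) ∈ Z) ∧
  (nomTraj f xbar0 ubar N, ebarSeq ρo (σow wbar) e N,
    tubeSeq ρs σso σsow wbar (Vs xbar0 xhat) (ebarSeq ρo (σow wbar) e) N) ∈ Sf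

/-- Reduced-horizon shift feasibility (key step in the proof of Theorem 1): if
`(x̄_0, (ū_0, …, ū_{N−1}))` is feasible at estimate `x̂` with bound `ē` and horizon
`N ≥ 2`, and the next-step estimate `x̂'` and bound `ē'` satisfy
`ē' ≤ ρ_o ē + σ_{o,w}(w̄)` and
`V_s(x̄_1, x̂') ≤ ρ_s V_s(x̄_0, x̂) + σ_{s,o}(ē) + σ_{s,o,w}(w̄)` with
`x̄_1 = f(x̄_0, ū_0)`, then the shifted candidate `(x̄_1, (ū_1, …, ū_{N−1}))` is
feasible at `x̂'` with bound `ē'` and horizon `N − 1`. -/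

lemma classK_nonneg {σ : ℝ → ℝ} (h : ClassK σ) {x : ℝ} (hx : 0 ≤ x) : 0 ≤ σ x := by
  rcases eq_or_lt_of_le hx with h0 | h0
  · simp [← h0, h.2.2]
  · have := h.2.1 (Set.self_mem_Ici) (Set.mem_Ici.mpr hx) h0
    linarith [h.2.2]

lemma nomTraj_shift {X U : Type*} (f : X → U → X) (x0 : X) (u : ℕ → U) (i : ℕ) :
    nomTraj f (f x0 (u 0)) (fun j => u (j + 1)) i = nomTraj f x0 u (i + 1) := by
  induction i with
  | zero => rfl
  | succ k ih => simp [nomTraj, ih]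

theorem reduced_horizon_shift_feasibility
    {nx m : ℕ}
    (f : Vec nx → Vec m → Vec nx)
    (Vs Vo : Vec nx → Vec nx → ℝ)
    (hVs_nonneg : ∀ a b, 0 ≤ Vs a b) (hVo_nonneg : ∀ a b, 0 ≤ Vo a b)
    (ρo ρs : ℝ) (hρo : ρo ∈ Set.Ioo (0 : ℝ) 1) (hρs : ρs ∈ Set.Ioo (0 : ℝ) 1)
    (wbar : ℝ) (hwbar : 0 ≤ wbar)
    (σow σso σsow : ℝ → ℝ)
    (hσow : ClassK σow) (hσso : ClassK σso) (hσsow : ClassK σsow)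
    (π : Vec nx → Vec nx → Vec m → Vec m)
    (Z : Set (Vec nx × Vec m))
    (Sf : Set (Vec nx × ℝ × ℝ))
    -- `S_f` is monotone in the bound components
    (hSf_mono : ∀ (xb : Vec nx) (e s e' s' : ℝ), (xb, e, s) ∈ Sf →
      0 ≤ e' → e' ≤ e → 0 ≤ s' → s' ≤ s → (xb, e', s') ∈ Sf)
    (N : ℕ) (hN : 2 ≤ N)
    (xhat : Vec nx) (e : ℝ) (he_nonneg : 0 ≤ e)
    (xbar0 : Vec nx) (ubar : ℕ → Vec m)
    (hfeas : Feasible f Vs Vo ρo ρs wbar σow σso σsow π Z Sf N xhat e xbar0 ubar)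
    (xhat' : Vec nx) (e' : ℝ) (he'_nonneg : 0 ≤ e')
    (he' : e' ≤ ρo * e + σow wbar)
    (hVs' : Vs (f xbar0 (ubar 0)) xhat'
      ≤ ρs * Vs xbar0 xhat + σso e + σsow wbar) :
    Feasible f Vs Vo ρo ρs wbar σow σso σsow π Z Sf (N - 1) xhat' e'
      (f xbar0 (ubar 0)) (fun i => ubar (i + 1)) := by
  
  obtain ⟨hρo0, hρo1⟩ := hρo
  obtain ⟨hρs0, hρs1⟩ := hρs
  set g := σow wbar with hg
  have hg0 : 0 ≤ g := classK_nonneg hσow hwbar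
  have hρone : (1 : ℝ) - ρo ≠ 0 := by linarith
  -- error bound shift
  have hebar : ∀ j, ebarSeq ρo g e' j ≤ ebarSeq ρo g e (j + 1) := by
    intro j
    have hpow : (0 : ℝ) ≤ ρo ^ j := by positivity
    have heq : ebarSeq ρo g e (j + 1)
        = ρo ^ j * (ρo * e + g) + ((1 - ρo ^ j) / (1 - ρo)) * g := by
      unfold ebarSeq
      field_simp
      ring
    rw [heq]
    unfold ebarSeq
    nlinarith [mul_le_mul_of_nonneg_left he' hpow]
  have hebar_nonneg : ∀ (a : ℝ), 0 ≤ a → ∀ j, 0 ≤ ebarSeq ρo g a j := by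
    intro a ha j
    have hpow : (0 : ℝ) ≤ ρo ^ j := by positivity
    have hpow1 : ρo ^ j ≤ 1 := pow_le_one₀ (le_of_lt hρo0) (le_of_lt hρo1)
    unfold ebarSeq
    have : 0 ≤ (1 - ρo ^ j) / (1 - ρo) := by
      apply div_nonneg <;> linarith
    nlinarith
  -- tube shift
  have he0 : ebarSeq ρo g e 0 = e := by simp [ebarSeq]
  have htube : ∀ i,
      tubeSeq ρs σso σsow wbar (Vs (f xbar0 (ubar 0)) xhat') (ebarSeq ρo g e') i
        ≤ tubeSeq ρs σso σsow wbar (Vs xbar0 xhat) (ebarSeq ρo g e) (i + 1) := by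
    intro i
    induction i with
    | zero =>
      simpa [tubeSeq, he0] using hVs'
    | succ k ih =>
      have hm : σso (ebarSeq ρo g e' k) ≤ σso (ebarSeq ρo g e (k + 1)) := by
        rcases eq_or_lt_of_le (hebar k) with h | h
        · rw [h]
        · exact le_of_lt (hσso.2.1 (Set.mem_Ici.mpr (hebar_nonneg e' he'_nonneg k))
            (Set.mem_Ici.mpr (hebar_nonneg e he_nonneg (k + 1))) h)
      show ρs * _ + _ + _ ≤ ρs * _ + _ + _
      have := mul_le_mul_of_nonneg_left ih (le_of_lt hρs0)
      linarith
  have htube_nonneg : ∀ i, 0 ≤ tubeSeq ρs σso σsow wbar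
      (Vs (f xbar0 (ubar 0)) xhat') (ebarSeq ρo g e') i := by
    intro i
    induction i with
    | zero => exact hVs_nonneg _ _
    | succ k ih =>
      have h1 : 0 ≤ σso (ebarSeq ρo g e' k) :=
        classK_nonneg hσso (hebar_nonneg e' he'_nonneg k)
      have h2 : 0 ≤ σsow wbar := classK_nonneg hσsow hwbar
      show 0 ≤ ρs * _ + _ + _
      nlinarith
  obtain ⟨hcon, hterm⟩ := hfeas
  constructor
  · intro i hi z zhat hzs hze
    have hi' : i + 1 < N := by omega
    have := hcon (i + 1) hi' z zhat
      (le_trans (by rw [← nomTraj_shift f xbar0 ubar i]; exact hzs) (htube i))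
      (le_trans hze (hebar i))
    simpa [nomTraj_shift] using this
  · have hN1 : N - 1 + 1 = N := by omega
    have hx : nomTraj f (f xbar0 (ubar 0)) (fun j => ubar (j + 1)) (N - 1)
        = nomTraj f xbar0 ubar N := by rw [nomTraj_shift, hN1]
    rw [hx]
    refine hSf_mono _ _ _ _ _ hterm
      (hebar_nonneg e' he'_nonneg (N - 1)) (by rw [← hN1]; exact hebar (N - 1))
      (htube_nonneg (N - 1)) (by rw [← hN1]; exact htube (N - 1))
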